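/- Let R ⊆ ℂ be a field containing a primitive root of unity of order n, let {a₁,…,a_r} ⊆ R be simple in R, and let α₁,…,α_r ∈ ℂ satisfy α_i^n = a_i for 1 ≤ i ≤ r. Then the Galois group of R(α₁,…,α_r) over R is isomorphic to (ℤ/nℤ)^r, the r-th Cartesian power of the cyclic group of order n. In particular, for any other roots α'₁,…,α'_r ∈ ℂ with (α'_i)^n = a_i for each i, there is a field automorphism of R(α₁,…,α_r, α'₁,…,α'_r) fixing R pointwise and sending α_i to α'_i for each i. -/

import Mathlib

noncomputable section

/-- The subfield of `ℂ` generated by the set `s` over the subfield `P`. -/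
def SF (P : Subfield ℂ) (s : Set ℂ) : Subfield ℂ := Subfield.closure ((P : Set ℂ) ∪ s)

/-- Multiplicative independence of a tuple of units of `ℂ`. -/
def MultIndep {k : ℕ} (a : Fin k → ℂˣ) : Prop :=
  ∀ n : Fin k → ℤ, (∏ i, a i ^ n i) = 1 → ∀ i, n i = 0

/-- The tuple `a` is simple in the subfield `K` of `ℂ`. -/
def IsSimpleIn {k : ℕ} (K : Subfield ℂ) (a : Fin k → ℂˣ) : Prop :=
  (∀ i, (a i : ℂ) ∈ K) ∧ MultIndep a ∧
  ∀ (n : ℕ), 0 < n → ∀ b ∈ Subgroup.closure (Set.range a),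
    (∃ x : ℂˣ, (x : ℂ) ∈ K ∧ x ^ n = b) →
    ∃ y ∈ Subgroup.closure (Set.range a), y ^ n = b

/-- The Galois group of `K` over `R`: the group of field automorphisms of `K` fixing
the elements of `R` pointwise (as a subgroup of the group of ring automorphisms). -/
def galFix (R K : Subfield ℂ) : Subgroup (↥K ≃+* ↥K) where
  carrier := {σ | ∀ x : ↥K, (x : ℂ) ∈ R → σ x = x}
  one_mem' := fun _ _ => rfl
  mul_mem' := by
    intro σ τ hσ hτ x hx
    show σ (τ x) = x
    rw [hτ x hx]
    exact hσ x hx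
  inv_mem' := by
    intro σ hσ x hx
    show σ.symm x = x
    apply σ.injective
    rw [RingEquiv.apply_symm_apply, hσ x hx]

set_option synthInstance.maxHeartbeats 1000000
set_option maxHeartbeats 2000000


namespace KP
open IntermediateField Polynomial

variable {r : ℕ} (R : Subfield ℂ) (α : Fin r → ℂ)

def EF : IntermediateField ↥R ℂ := IntermediateField.adjoin ↥R (Set.range α)

variable {R α}

lemma mem_EF (i : Fin r) : α i ∈ EF R α := IntermediateField.subset_adjoin _ _ ⟨i, rfl⟩

lemma memR_EF {x : ℂ} (hx : x ∈ R) : x ∈ EF R α := (EF R α).algebraMap_mem ⟨x, hx⟩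

variable (R α) in
def bE (v : Fin r → ℤ) : ↥(EF R α) := ∏ i, (⟨α i, mem_EF i⟩ : ↥(EF R α)) ^ (v i)

lemma coe_bE (v : Fin r → ℤ) : ((bE R α v : ↥(EF R α)) : ℂ) = ∏ i, (α i) ^ (v i) := by
  show (EF R α).val _ = _
  rw [bE, map_prod]
  refine Finset.prod_congr rfl fun i _ => ?_
  rw [map_zpow₀]
  rfl

variable (R α) in
abbrev GA := ↥(EF R α) ≃ₐ[↥R] ↥(EF R α)

lemma fix_of_memR (σ : GA R α) (x : ↥(EF R α)) (hx : (x : ℂ) ∈ R) : σ x = x := by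
  have h : x = algebraMap ↥R ↥(EF R α) ⟨(x : ℂ), hx⟩ := Subtype.ext rfl
  rw [h, AlgEquiv.commutes]

variable {n : ℕ} {ζ : ℂ} {a : Fin r → ℂˣ}

section main
variable [NeZero n] (hζR : ζ ∈ R) (hζ : IsPrimitiveRoot ζ n)
  (ha : ∀ i, (a i : ℂ) ∈ R) (hα : ∀ i, α i ^ n = (a i : ℂ))

include hζR hζ in
lemma rou_memR {z : ℂ} (hz : z ^ n = 1) : z ∈ R := by
  obtain ⟨i, _, hi⟩ := hζ.eq_pow_of_pow_eq_one hz
  exact hi ▸ pow_mem hζR i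

include hα in
lemma α_ne (i : Fin r) : α i ≠ 0 := by
  intro h
  have := hα i
  rw [h, zero_pow (NeZero.ne n)] at this
  exact (a i).ne_zero this.symm

include hα in
lemma bE_ne (v : Fin r → ℤ) : bE R α v ≠ 0 := by
  rw [bE]
  apply Finset.prod_ne_zero_iff.mpr
  intro i _
  apply zpow_ne_zero
  exact Subtype.coe_ne_coe.mp (by simpa using α_ne hα i)

include hα in
lemma coe_bE_ne (v : Fin r → ℤ) : ((bE R α v : ↥(EF R α)) : ℂ) ≠ 0 := by
  simpa using bE_ne hα v

variable (R α) in
def Pc (σ : GA R α) (v : Fin r → ℤ) : ℂ := (σ (bE R α v) : ℂ) / ((bE R α v : ↥(EF R α)) : ℂ)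

include hα in
lemma Pc_ne (σ : GA R α) (v : Fin r → ℤ) : Pc R α σ v ≠ 0 := by
  apply div_ne_zero _ (coe_bE_ne hα v)
  intro h
  exact bE_ne hα v (σ.injective (by rw [map_zero]; exact Subtype.ext h))

include ha hα in
lemma bE_pow_memR (v : Fin r → ℤ) : ((bE R α v : ↥(EF R α)) : ℂ) ^ n ∈ R := by
  rw [coe_bE, ← Finset.prod_pow]
  apply prod_mem
  intro i _
  have : ((α i) ^ (v i)) ^ n = ((a i : ℂ)) ^ (v i) := by
    rw [← zpow_natCast ((α i) ^ (v i)), ← zpow_mul, mul_comm, zpow_mul, zpow_natCast, hα i]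
  rw [this]
  exact zpow_mem (ha i) _

include ha hα in
lemma bE_pow_fixed (σ : GA R α) (v : Fin r → ℤ) : σ (bE R α v ^ n) = bE R α v ^ n :=
  fix_of_memR σ _ (by rw [SubmonoidClass.coe_pow]; exact bE_pow_memR ha hα v)

include ha hα in
lemma Pc_pow (σ : GA R α) (v : Fin r → ℤ) : Pc R α σ v ^ n = 1 := by
  rw [Pc, div_pow, ← SubmonoidClass.coe_pow, ← map_pow, bE_pow_fixed ha hα σ v,
    SubmonoidClass.coe_pow, div_self (pow_ne_zero _ (coe_bE_ne hα v))]

include hζR hζ ha hα in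
lemma Pc_memR (σ : GA R α) (v : Fin r → ℤ) : Pc R α σ v ∈ R :=
  rou_memR hζR hζ (Pc_pow ha hα σ v)

include hα in
lemma bE_add (v w : Fin r → ℤ) : bE R α (v + w) = bE R α v * bE R α w := by
  rw [bE, bE, bE, ← Finset.prod_mul_distrib]
  refine Finset.prod_congr rfl fun i _ => ?_
  rw [Pi.add_apply, zpow_add₀]
  exact Subtype.coe_ne_coe.mp (by simpa using α_ne hα i)

include hα in
lemma Pc_add (σ : GA R α) (v w : Fin r → ℤ) :
    Pc R α σ (v + w) = Pc R α σ v * Pc R α σ w := by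
  rw [Pc, Pc, Pc, bE_add hα, map_mul, MulMemClass.coe_mul, MulMemClass.coe_mul]
  rw [div_mul_div_comm]

include hζR hζ ha hα in
lemma Pc_mul (σ τ : GA R α) (v : Fin r → ℤ) :
    Pc R α (σ * τ) v = Pc R α σ v * Pc R α τ v := by
  set β := bE R α v with hβ
  have hc : τ β = (⟨Pc R α τ v, memR_EF (Pc_memR hζR hζ ha hα τ v)⟩ : ↥(EF R α)) * β := by
    apply Subtype.ext
    push_cast
    rw [Pc, div_mul_cancel₀]
    exact coe_bE_ne hα v
  have : (σ * τ) β = σ (τ β) := rfl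
  rw [Pc, this, hc, map_mul,
    fix_of_memR σ _ (Pc_memR hζR hζ ha hα τ v)]
  push_cast
  rw [Pc, Pc]
  field_simp
  ring

include hα in
lemma Pc_one (v : Fin r → ℤ) : Pc R α 1 v = 1 := by
  rw [Pc]
  show ((bE R α v : ↥(EF R α)) : ℂ) / _ = 1
  rw [div_self (coe_bE_ne hα v)]

end main

section dlog
variable [NeZero n] (hζ : IsPrimitiveRoot ζ n)

variable (ζ n) in
def dlog (z : ℂ) : ZMod n :=
  if h : ∃ k : ZMod n, ζ ^ (k.val) = z then Classical.choose h else 0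

include hζ in
lemma dlog_spec {z : ℂ} (hz : z ^ n = 1) : ζ ^ (dlog n ζ z).val = z := by
  obtain ⟨i, hi, h⟩ := hζ.eq_pow_of_pow_eq_one hz
  have hex : ∃ k : ZMod n, ζ ^ (k.val) = z := ⟨(i : ZMod n), by rwa [ZMod.val_natCast_of_lt hi]⟩
  rw [dlog, dif_pos hex]
  exact Classical.choose_spec hex

include hζ in
lemma pow_val_inj {j k : ZMod n} (h : ζ ^ j.val = ζ ^ k.val) : j = k := by
  have := hζ.pow_inj (ZMod.val_lt j) (ZMod.val_lt k) h
  exact ZMod.val_injective n this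

include hζ in
lemma pow_val_cast (m : ℕ) : ζ ^ ((m : ZMod n)).val = ζ ^ m := by
  conv_rhs => rw [← Nat.div_add_mod m n]
  rw [pow_add, pow_mul, hζ.pow_eq_one, one_pow, one_mul, ZMod.val_natCast]

include hζ in
lemma dlog_mul {z w : ℂ} (hz : z ^ n = 1) (hw : w ^ n = 1) :
    dlog n ζ (z * w) = dlog n ζ z + dlog n ζ w := by
  apply pow_val_inj hζ
  rw [dlog_spec hζ (by rw [mul_pow, hz, hw, one_mul])]
  have : dlog n ζ z + dlog n ζ w = (((dlog n ζ z).val + (dlog n ζ w).val : ℕ) : ZMod n) := by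
    rw [Nat.cast_add, ZMod.natCast_val, ZMod.natCast_val, ZMod.cast_id, ZMod.cast_id]
  rw [this, pow_val_cast hζ, pow_add, dlog_spec hζ hz, dlog_spec hζ hw]

include hζ in
lemma dlog_one : dlog n ζ 1 = 0 := by
  apply pow_val_inj hζ
  rw [dlog_spec hζ (one_pow n), ZMod.val_zero, pow_zero]

include hζ in
lemma dlog_eq_iff {z : ℂ} (hz : z ^ n = 1) {k : ZMod n} : dlog n ζ z = k ↔ ζ ^ k.val = z := by
  constructor
  · rintro rfl; exact dlog_spec hζ hz
  · intro h; exact pow_val_inj hζ (by rw [dlog_spec hζ hz, ← h])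

end dlog

section phi
variable [NeZero n] (hζR : ζ ∈ R) (hζ : IsPrimitiveRoot ζ n)
  (ha : ∀ i, (a i : ℂ) ∈ R) (hα : ∀ i, α i ^ n = (a i : ℂ))

variable (n ζ R α) in
def phiFun (σ : GA R α) : Fin r → Multiplicative (ZMod n) :=
  fun i => Multiplicative.ofAdd (dlog n ζ (Pc R α σ (Pi.single i 1)))

include hζR hζ ha hα in
lemma phiFun_mul (σ τ : GA R α) :
    phiFun R α n ζ (σ * τ) = phiFun R α n ζ σ * phiFun R α n ζ τ := by
  funext i
  simp only [phiFun, Pi.mul_apply, ← ofAdd_add]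
  congr 1
  rw [Pc_mul hζR hζ ha hα]
  exact dlog_mul hζ (Pc_pow ha hα σ _) (Pc_pow ha hα τ _)

variable (n ζ R α) in
def phi (hζR : ζ ∈ R) (hζ : IsPrimitiveRoot ζ n) (ha : ∀ i, (a i : ℂ) ∈ R)
    (hα : ∀ i, α i ^ n = (a i : ℂ)) : GA R α →* (Fin r → Multiplicative (ZMod n)) :=
  MonoidHom.mk' (phiFun R α n ζ) (phiFun_mul hζR hζ ha hα)

include hα in
lemma bE_single (i : Fin r) : bE R α (Pi.single i 1) = ⟨α i, mem_EF i⟩ := by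
  rw [bE, Finset.prod_eq_single i (fun j _ hj => by rw [Pi.single_eq_of_ne hj, zpow_zero])
    (fun h => absurd (Finset.mem_univ i) h)]
  rw [Pi.single_eq_same, zpow_one]

include hα in
lemma Pc_single (σ : GA R α) (i : Fin r) :
    Pc R α σ (Pi.single i 1) = (σ ⟨α i, mem_EF i⟩ : ℂ) / α i := by
  rw [Pc, bE_single hα]

-- if σ fixes each generator, σ = 1
lemma eq_one_of_fix (σ : GA R α) (h : ∀ i, σ ⟨α i, mem_EF i⟩ = ⟨α i, mem_EF i⟩) : σ = 1 := by
  suffices h' : ∀ (x : ℂ) (hx : x ∈ EF R α), σ ⟨x, hx⟩ = ⟨x, hx⟩ by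
    ext ⟨x, hx⟩
    exact congrArg Subtype.val (h' x hx)
  intro x hx
  induction hx using IntermediateField.adjoin_induction with
  | mem x hx =>
      obtain ⟨i, rfl⟩ := hx
      exact h i
  | algebraMap x => exact fix_of_memR σ _ x.2
  | add x y hx hy px py =>
      have : (⟨x + y, add_mem hx hy⟩ : ↥(EF R α)) = ⟨x, hx⟩ + ⟨y, hy⟩ := rfl
      rw [this, map_add, px, py]
  | inv x hx px =>
      have : (⟨x⁻¹, inv_mem hx⟩ : ↥(EF R α)) = (⟨x, hx⟩ : ↥(EF R α))⁻¹ := rfl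
      rw [this, map_inv₀, px]
  | mul x y hx hy px py =>
      have : (⟨x * y, mul_mem hx hy⟩ : ↥(EF R α)) = ⟨x, hx⟩ * ⟨y, hy⟩ := rfl
      rw [this, map_mul, px, py]

include hζR hζ ha hα in
lemma phi_inj : Function.Injective (phi R α n ζ hζR hζ ha hα) := by
  rw [injective_iff_map_eq_one]
  intro σ hσ
  apply eq_one_of_fix σ
  intro i
  have h1 : dlog n ζ (Pc R α σ (Pi.single i 1)) = 0 := by
    have := congrFun hσ i
    simpa [phi, phiFun] using this
  have h2 : Pc R α σ (Pi.single i 1) = 1 := by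
    have := dlog_spec hζ (Pc_pow ha hα σ (Pi.single i 1))
    rw [h1, ZMod.val_zero, pow_zero] at this
    exact this.symm
  rw [Pc_single hα] at h2
  apply Subtype.ext
  show (σ ⟨α i, mem_EF i⟩ : ℂ) = α i
  exact (div_eq_one_iff_eq (α_ne hα i)).mp h2

end phi

section theta

-- elements of the closure of the range of a are products of zpowers
lemma mem_closure_range_iff {y : ℂˣ} (a : Fin r → ℂˣ) :
    y ∈ Subgroup.closure (Set.range a) ↔ ∃ c : Fin r → ℤ, y = ∏ i, a i ^ (c i) := by
  constructor
  · intro hy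
    induction hy using Subgroup.closure_induction with
    | mem x hx =>
        obtain ⟨i, rfl⟩ := hx
        exact ⟨Pi.single i 1, by rw [Finset.prod_eq_single i
          (fun j _ hj => by rw [Pi.single_eq_of_ne hj, zpow_zero])
          (fun h => absurd (Finset.mem_univ i) h), Pi.single_eq_same, zpow_one]⟩
    | one => exact ⟨0, by simp⟩
    | mul x y hx hy px py =>
        obtain ⟨c, rfl⟩ := px
        obtain ⟨d, rfl⟩ := py
        refine ⟨c + d, ?_⟩
        rw [← Finset.prod_mul_distrib]
        exact Finset.prod_congr rfl (fun i _ => by rw [Pi.add_apply, zpow_add])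
    | inv x hx px =>
        obtain ⟨c, rfl⟩ := px
        refine ⟨-c, ?_⟩
        rw [← Finset.prod_inv_distrib]
        exact Finset.prod_congr rfl (fun i _ => by rw [Pi.neg_apply, zpow_neg])
  · rintro ⟨c, rfl⟩
    exact Subgroup.prod_mem _ fun i _ =>
      Subgroup.zpow_mem _ (Subgroup.subset_closure (Set.mem_range_self i)) _

lemma prod_zpow_mem_closure (a : Fin r → ℂˣ) (c : Fin r → ℤ) :
    (∏ i, a i ^ (c i)) ∈ Subgroup.closure (Set.range a) :=
  (mem_closure_range_iff a).mpr ⟨c, rfl⟩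

end theta

section galois
variable [NeZero n] (hζR : ζ ∈ R) (hζ : IsPrimitiveRoot ζ n)
  (ha : ∀ i, (a i : ℂ) ∈ R) (hα : ∀ i, α i ^ n = (a i : ℂ))

variable (R a n) in
def pPol (ha : ∀ i, (a i : ℂ) ∈ R) : Polynomial ↥R :=
  ∏ i : Fin r, (X ^ n - C (⟨(a i : ℂ), ha i⟩ : ↥R))

include hζR in
lemma pPol_ne : pPol R n a ha ≠ 0 := by
  apply Monic.ne_zero
  exact monic_prod_of_monic _ _ (fun i _ => monic_X_pow_sub_C _ (NeZero.ne n))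

lemma algebraMap_R_apply (x : ↥R) : algebraMap ↥R ℂ x = (x : ℂ) := rfl

lemma aeval_pPol (x : ℂ) : aeval x (pPol R n a ha) = ∏ i : Fin r, (x ^ n - (a i : ℂ)) := by
  rw [pPol, map_prod]
  exact Finset.prod_congr rfl fun i _ => by
    rw [map_sub, map_pow, aeval_X, aeval_C, algebraMap_R_apply]

include hζR hζ hα in
lemma EF_eq_adjoin_rootSet : EF R α = adjoin ↥R ((pPol R n a ha).rootSet ℂ) := by
  apply le_antisymm
  · rw [EF, adjoin_le_iff]
    rintro x ⟨i, rfl⟩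
    apply subset_adjoin
    rw [mem_rootSet]
    refine ⟨pPol_ne hζR ha, ?_⟩
    rw [aeval_pPol]
    apply Finset.prod_eq_zero (Finset.mem_univ i)
    rw [hα i, sub_self]
  · rw [adjoin_le_iff]
    intro x hx
    rw [mem_rootSet, aeval_pPol] at hx
    obtain ⟨-, hx⟩ := hx
    obtain ⟨i, -, hi⟩ := Finset.prod_eq_zero_iff.mp hx
    have hxn : x ^ n = (a i : ℂ) := by linear_combination hi
    have hαne : α i ≠ 0 := α_ne hα i
    have hdiv : (x / α i) ^ n = 1 := by
      rw [div_pow, hxn, hα i, div_self (a i).ne_zero]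
    have hmem : (x / α i) ∈ R := rou_memR hζR hζ hdiv
    have : x = (x / α i) * α i := by field_simp
    rw [this]
    exact mul_mem (memR_EF hmem) (mem_EF i)

include ha hα in
lemma finDim : FiniteDimensional ↥R ↥(EF R α) := by
  rw [EF]
  have : Finite ↑(Set.range α) := Set.finite_range α
  apply IntermediateField.finiteDimensional_adjoin
  rintro x ⟨i, rfl⟩
  refine ⟨X ^ n - C (⟨(a i : ℂ), ha i⟩ : ↥R), monic_X_pow_sub_C _ (NeZero.ne n), ?_⟩
  rw [eval₂_sub, eval₂_pow, eval₂_X, eval₂_C, algebraMap_R_apply]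
  show α i ^ n - (a i : ℂ) = 0
  rw [hα i, sub_self]

include hζR hζ ha hα in
lemma isGaloisEF : IsGalois ↥R ↥(EF R α) := by
  rw [EF_eq_adjoin_rootSet hζR hζ ha hα]
  have h1 : IsSplittingField ↥R ↥(adjoin ↥R ((pPol R n a ha).rootSet ℂ)) (pPol R n a ha) :=
    adjoin_rootSet_isSplittingField (IsAlgClosed.splits _)
  have h2 : Normal ↥R ↥(adjoin ↥R ((pPol R n a ha).rootSet ℂ)) :=
    Normal.of_isSplittingField (pPol R n a ha)
  exact ⟨⟩

include hζR hζ ha hα in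
lemma mem_R_of_fixed (x : ↥(EF R α)) (h : ∀ σ : GA R α, σ x = x) : (x : ℂ) ∈ R := by
  haveI := finDim ha hα
  haveI := isGaloisEF hζR hζ ha hα
  have htop : (⊥ : IntermediateField ↥R ↥(EF R α)).fixingSubgroup = ⊤ := by
    apply le_antisymm le_top
    intro σ _
    rw [IntermediateField.mem_fixingSubgroup_iff]
    intro y hy
    obtain ⟨z, rfl⟩ := IntermediateField.mem_bot.mp hy
    exact σ.commutes z
  have hbot : IntermediateField.fixedField (⊤ : Subgroup (GA R α)) = ⊥ := by
    rw [← htop]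
    exact IsGalois.fixedField_fixingSubgroup ⊥
  have hx : x ∈ IntermediateField.fixedField (⊤ : Subgroup (GA R α)) := by
    intro σ
    exact h σ.1
  rw [hbot] at hx
  obtain ⟨z, rfl⟩ := IntermediateField.mem_bot.mp hx
  exact z.2

end galois

section count
variable [NeZero n] (hζR : ζ ∈ R) (hζ : IsPrimitiveRoot ζ n)
  (ha : ∀ i, (a i : ℂ) ∈ R) (hα : ∀ i, α i ^ n = (a i : ℂ))

include hα in
lemma coe_bE_pow (v : Fin r → ℤ) :
    ((bE R α v : ↥(EF R α)) : ℂ) ^ n = ∏ i, (a i : ℂ) ^ (v i) := by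
  rw [coe_bE, ← Finset.prod_pow]
  refine Finset.prod_congr rfl fun i _ => ?_
  rw [← zpow_natCast ((α i) ^ (v i)), ← zpow_mul, mul_comm, zpow_mul, zpow_natCast, hα i]

lemma coe_prod_zpow (c : Fin r → ℤ) :
    ((∏ i, a i ^ (c i) : ℂˣ) : ℂ) = ∏ i, (a i : ℂ) ^ (c i) := by
  rw [← Units.coeHom_apply, map_prod]
  exact Finset.prod_congr rfl fun i _ => Units.val_zpow_eq_zpow_val _ _

variable (R α n ζ) in
def theta (hζR : ζ ∈ R) (hζ : IsPrimitiveRoot ζ n) (ha : ∀ i, (a i : ℂ) ∈ R)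
    (hα : ∀ i, α i ^ n = (a i : ℂ)) (m : Fin r → ZMod n) : GA R α →* ℂˣ :=
  MonoidHom.mk' (fun σ => Units.mk0 (Pc R α σ (fun i => ((m i).val : ℤ))) (Pc_ne hα σ _))
    (fun σ τ => Units.ext (by
      show Pc R α (σ * τ) _ = Pc R α σ _ * Pc R α τ _
      exact Pc_mul hζR hζ ha hα σ τ _))

include hζR hζ ha hα in
lemma theta_inj (hind : _root_.MultIndep a)
    (hpure : ∀ (k : ℕ), 0 < k → ∀ b ∈ Subgroup.closure (Set.range a),
      (∃ x : ℂˣ, (x : ℂ) ∈ R ∧ x ^ k = b) →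
      ∃ y ∈ Subgroup.closure (Set.range a), y ^ k = b) :
    Function.Injective (theta R α n ζ hζR hζ ha hα) := by
  intro m m' hmm
  set v : Fin r → ℤ := fun i => ((m i).val : ℤ) with hv
  set w : Fin r → ℤ := fun i => ((m' i).val : ℤ) with hw
  -- ∀ σ, Pc σ v = Pc σ w
  have hP : ∀ σ : GA R α, Pc R α σ v = Pc R α σ w := by
    intro σ
    exact congrArg (fun f : GA R α →* ℂˣ => ((f σ : ℂˣ) : ℂ)) hmm
  -- bE (v - w) is fixed by all σ
  have hPvw : ∀ σ : GA R α, Pc R α σ (v - w) = 1 := by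
    intro σ
    have h1 : Pc R α σ ((v - w) + w) = Pc R α σ (v - w) * Pc R α σ w :=
      Pc_add hα σ _ _
    rw [sub_add_cancel, hP σ] at h1
    field_simp [Pc_ne hα σ w] at h1
    exact h1.symm
  have hfix : ∀ σ : GA R α, σ (bE R α (v - w)) = bE R α (v - w) := by
    intro σ
    have := hPvw σ
    rw [Pc, div_eq_one_iff_eq (coe_bE_ne hα _)] at this
    exact Subtype.ext this
  have hmemR : ((bE R α (v - w) : ↥(EF R α)) : ℂ) ∈ R :=
    mem_R_of_fixed hζR hζ ha hα _ hfix
  -- purity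
  set b : ℂˣ := ∏ i, a i ^ (v i - w i) with hb
  have hbmem : b ∈ Subgroup.closure (Set.range a) := prod_zpow_mem_closure a _
  have hxex : ∃ x : ℂˣ, (x : ℂ) ∈ R ∧ x ^ n = b := by
    refine ⟨Units.mk0 _ (coe_bE_ne hα (v - w)), hmemR, Units.ext ?_⟩
    rw [Units.val_pow_eq_pow_val]
    show ((bE R α (v - w) : ↥(EF R α)) : ℂ) ^ n = (b : ℂ)
    rw [coe_bE_pow hα, hb, coe_prod_zpow]
    exact Finset.prod_congr rfl fun i _ => by rw [Pi.sub_apply]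
  obtain ⟨y, hymem, hyn⟩ := hpure n (Nat.pos_of_ne_zero (NeZero.ne n)) b hbmem hxex
  obtain ⟨c, rfl⟩ := (mem_closure_range_iff a).mp hymem
  -- multiplicative independence
  have hprod : (∏ i, a i ^ ((v i - w i) - n * c i)) = 1 := by
    have h1 : (∏ i, a i ^ (c i)) ^ n = ∏ i, a i ^ ((n : ℤ) * c i) := by
      rw [← Finset.prod_pow]
      exact Finset.prod_congr rfl fun i _ => by rw [← zpow_natCast (a i ^ c i), ← zpow_mul, mul_comm]
    rw [h1] at hyn
    calc (∏ i, a i ^ ((v i - w i) - n * c i))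
        = (∏ i, a i ^ (v i - w i)) * (∏ i, a i ^ ((n : ℤ) * c i))⁻¹ := by
          rw [← Finset.prod_inv_distrib, ← Finset.prod_mul_distrib]
          exact Finset.prod_congr rfl fun i _ => by rw [← zpow_neg, ← zpow_add, sub_eq_add_neg]
      _ = 1 := by rw [hyn, hb, mul_inv_cancel]
  have hz := hind _ hprod
  -- conclude m = m'
  funext i
  have h1 : v i - w i = n * c i := by linarith [hz i]
  have h2 : ((v i : ZMod n)) - ((w i : ZMod n)) = 0 := by
    have := congrArg (fun t : ℤ => (t : ZMod n)) h1
    push_cast at this ⊢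
    rw [this]
    simp
  have hcast : ∀ m₀ : ZMod n, ((((m₀.val : ℤ)) : ZMod n)) = m₀ := by
    intro m₀
    push_cast
    rw [ZMod.natCast_val, ZMod.cast_id]
  rw [hv, hw] at h2
  simp only at h2
  rw [hcast (m i), hcast (m' i)] at h2
  exact sub_eq_zero.mp h2

end count

section bij
variable [NeZero n] (hζR : ζ ∈ R) (hζ : IsPrimitiveRoot ζ n)
  (ha : ∀ i, (a i : ℂ) ∈ R) (hα : ∀ i, α i ^ n = (a i : ℂ))

include hζR hζ ha hα in
lemma phi_bij (hind : _root_.MultIndep a)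
    (hpure : ∀ (k : ℕ), 0 < k → ∀ b ∈ Subgroup.closure (Set.range a),
      (∃ x : ℂˣ, (x : ℂ) ∈ R ∧ x ^ k = b) →
      ∃ y ∈ Subgroup.closure (Set.range a), y ^ k = b) :
    Function.Bijective (phi R α n ζ hζR hζ ha hα) := by
  haveI := finDim ha hα
  haveI : Finite (GA R α) := inferInstance
  have hinj := phi_inj hζR hζ ha hα
  have hcomm : ∀ σ τ : GA R α, σ * τ = τ * σ := by
    intro σ τ
    apply hinj
    rw [map_mul, map_mul, mul_comm]
  letI : CommGroup (GA R α) := { (inferInstance : Group (GA R α)) with mul_comm := hcomm }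
  haveI : NeZero (Monoid.exponent (GA R α)) := ⟨Monoid.exponent_ne_zero_of_finite⟩
  obtain ⟨e⟩ := CommGroup.monoidHom_mulEquiv_of_hasEnoughRootsOfUnity (GA R α) ℂ
  haveI : Finite (GA R α →* ℂˣ) := Finite.of_equiv _ e.toEquiv.symm
  have h1 : Nat.card (Fin r → ZMod n) ≤ Nat.card (GA R α →* ℂˣ) :=
    Nat.card_le_card_of_injective _ (theta_inj hζR hζ ha hα hind hpure)
  have hcard1 : Nat.card (GA R α →* ℂˣ) = Nat.card (GA R α) := Nat.card_congr e.toEquiv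
  have h2 : Nat.card (GA R α) ≤ Nat.card (Fin r → Multiplicative (ZMod n)) :=
    Nat.card_le_card_of_injective _ hinj
  have hc3 : Nat.card (Fin r → ZMod n) = Nat.card (Fin r → Multiplicative (ZMod n)) :=
    Nat.card_congr (Equiv.piCongrRight fun _ => Multiplicative.ofAdd)
  rw [Nat.bijective_iff_injective_and_card]
  exact ⟨hinj, by omega⟩

end bij

section bridge

lemma coe_algEMap (y : ↥R) : ((algebraMap ↥R ↥(EF R α) y : ↥(EF R α)) : ℂ) = (y : ℂ) := rfl

lemma SF_eq : SF R (Set.range α) = (EF R α).toSubfield := by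
  apply le_antisymm
  · rw [SF]
    rw [Subfield.closure_le]
    rintro x (hx | ⟨i, rfl⟩)
    · exact memR_EF hx
    · exact mem_EF i
  · intro x hx
    rw [IntermediateField.mem_toSubfield] at hx
    induction hx using IntermediateField.adjoin_induction with
    | mem x hx => exact Subfield.subset_closure (Or.inr hx)
    | algebraMap y => exact Subfield.subset_closure (Or.inl y.2)
    | add x y _ _ px py => exact add_mem px py
    | inv x _ px => exact inv_mem px
    | mul x y _ _ px py => exact mul_mem px py

variable (R α) in
def bridge : ↥(galFix R (EF R α).toSubfield) ≃* GA R α where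
  toFun := fun σp => AlgEquiv.ofRingEquiv
    (f := (σp.1 : ↥(EF R α) ≃+* ↥(EF R α))) (fun y => σp.2 _ y.2)
  invFun := fun σ => ⟨(σ : ↥(EF R α) ≃+* ↥(EF R α)), fun x hx => fix_of_memR σ x hx⟩
  left_inv := fun σp => Subtype.ext (RingEquiv.ext fun x => rfl)
  right_inv := fun σ => AlgEquiv.ext fun x => rfl
  map_mul' := fun σp τp => AlgEquiv.ext fun x => rfl

end bridge

section final
variable [NeZero n] (hζR : ζ ∈ R) (hζ : IsPrimitiveRoot ζ n)
  (ha : ∀ i, (a i : ℂ) ∈ R) (hα : ∀ i, α i ^ n = (a i : ℂ))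

include hα in
lemma root_ratio {α' : Fin r → ℂ} (hα' : ∀ i, α' i ^ n = (a i : ℂ)) (i : Fin r) :
    (α' i / α i) ^ n = 1 := by
  rw [div_pow, hα' i, hα i, div_self (a i).ne_zero]

include hζR hζ ha hα in
lemma exists_sigma (hind : _root_.MultIndep a)
    (hpure : ∀ (k : ℕ), 0 < k → ∀ b ∈ Subgroup.closure (Set.range a),
      (∃ x : ℂˣ, (x : ℂ) ∈ R ∧ x ^ k = b) →
      ∃ y ∈ Subgroup.closure (Set.range a), y ^ k = b)
    {α' : Fin r → ℂ} (hα' : ∀ i, α' i ^ n = (a i : ℂ)) :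
    ∃ σ : GA R α, ∀ i, ((σ ⟨α i, mem_EF i⟩ : ↥(EF R α)) : ℂ) = α' i := by
  obtain ⟨σ, hσ⟩ := (phi_bij hζR hζ ha hα hind hpure).2
    (fun i => Multiplicative.ofAdd (dlog n ζ (α' i / α i)))
  refine ⟨σ, fun i => ?_⟩
  have h1 : dlog n ζ (Pc R α σ (Pi.single i 1)) = dlog n ζ (α' i / α i) := by
    have := congrFun hσ i
    simpa [phi, phiFun] using this
  have h2 : Pc R α σ (Pi.single i 1) = α' i / α i := by
    rw [← dlog_spec hζ (Pc_pow ha hα σ (Pi.single i 1)), h1,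
      dlog_spec hζ (root_ratio hα hα' i)]
  rw [Pc_single hα] at h2
  have h3 := (div_eq_div_iff (α_ne hα i) (α_ne hα i)).mp h2
  exact mul_right_cancel₀ (α_ne hα i) h3

include hζR hζ hα in
lemma SF_union_eq {α' : Fin r → ℂ} (hα' : ∀ i, α' i ^ n = (a i : ℂ)) :
    SF R (Set.range α ∪ Set.range α') = SF R (Set.range α) := by
  apply le_antisymm
  · rw [SF, Subfield.closure_le]
    rintro x (hx | (⟨i, rfl⟩ | ⟨i, rfl⟩))
    · exact Subfield.subset_closure (Or.inl hx)
    · exact Subfield.subset_closure (Or.inr ⟨i, rfl⟩)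
    · have : α' i = (α' i / α i) * α i := by
        field_simp [α_ne hα i]
      rw [this]
      exact mul_mem
        (Subfield.subset_closure (Or.inl (rou_memR hζR hζ (root_ratio hα hα' i))))
        (Subfield.subset_closure (Or.inr ⟨i, rfl⟩))
  · exact Subfield.closure_mono (Set.union_subset_union_right _ Set.subset_union_left)

end final
end KP

open KP in
/-- If `R ⊆ ℂ` contains a primitive `n`-th root of unity, `{a₁,…,a_r}`
is simple in `R` and `αᵢⁿ = aᵢ`, then the Galois group of `R(α₁,…,α_r)` over `R` is
isomorphic to `(ℤ/nℤ)^r`; in particular any other system of `n`-th roots `α'ᵢ` of the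
`aᵢ` is conjugate to `(α₁,…,α_r)` over `R`. -/
theorem kummer_galois_group
    (R : Subfield ℂ) (n : ℕ) (hn : 0 < n)
    (ζ : ℂ) (hζR : ζ ∈ R) (hζ : IsPrimitiveRoot ζ n)
    (r : ℕ) (a : Fin r → ℂˣ) (hsimple : IsSimpleIn R a)
    (α : Fin r → ℂ) (hα : ∀ i, α i ^ n = (a i : ℂ)) :
    Nonempty (↥(galFix R (SF R (Set.range α))) ≃*
      (Fin r → Multiplicative (ZMod n))) ∧
    ∀ α' : Fin r → ℂ, (∀ i, α' i ^ n = (a i : ℂ)) →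
      ∃ σ : ↥(SF R (Set.range α ∪ Set.range α')) ≃+* ↥(SF R (Set.range α ∪ Set.range α')),
        (∀ x : ↥(SF R (Set.range α ∪ Set.range α')), (x : ℂ) ∈ R → σ x = x) ∧
        ∀ i, ∀ x : ↥(SF R (Set.range α ∪ Set.range α')),
          (x : ℂ) = α i → ((σ x : ↥(SF R (Set.range α ∪ Set.range α'))) : ℂ) = α' i := by
  haveI : NeZero n := ⟨hn.ne'⟩
  obtain ⟨ha, hind, hpure⟩ := hsimple
  constructor
  · rw [SF_eq]
    exact ⟨(bridge R α).trans (MulEquiv.ofBijective _ (phi_bij hζR hζ ha hα hind hpure))⟩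
  · intro α' hα'
    rw [SF_union_eq hζR hζ hα hα', SF_eq]
    obtain ⟨σ, hσ⟩ := exists_sigma hζR hζ ha hα hind hpure hα'
    refine ⟨((bridge R α).symm σ).1, ((bridge R α).symm σ).2, ?_⟩
    intro i x hx
    have hx' : x = (⟨α i, mem_EF i⟩ : ↥(EF R α)) := Subtype.ext hx
    rw [hx']
    exact hσ i
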